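/- Let C be a Hopf algebra over k with antipode S, and let λ: C → k be a normalised left integral, i.e. a k-linear map with c₍₁₎λ(c₍₂₎) = λ(c)·1_C for all c ∈ C and λ(1_C) = 1. Then the map δ: C⊗C → k defined by δ(c⊗c') = λ(c·S(c')) is a cointegral on C; in particular C is coseparable. -/

import Mathlib

open TensorProduct LinearMap

noncomputable section

variable {k : Type*} [Field k]
variable {C : Type*} [Ring C] [HopfAlgebra k C]

/-- A cointegral on the coalgebra `C`: `δ(c₍₁₎ ⊗ c₍₂₎) = ε(c)` and
`c₍₁₎ δ(c₍₂₎ ⊗ c') = δ(c ⊗ c'₍₁₎) c'₍₂₎`. -/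
def IsCointegral (δ : C ⊗[k] C →ₗ[k] k) : Prop :=
  (∀ c : C, δ (Coalgebra.comul (R := k) c) = Coalgebra.counit (R := k) c) ∧
  (∀ c c' : C,
    (TensorProduct.rid k C) (lTensor C δ ((TensorProduct.assoc k C C C)
      ((Coalgebra.comul (R := k) c) ⊗ₜ c'))) =
    (TensorProduct.lid k C) (rTensor C δ ((TensorProduct.assoc k C C C).symm
      (c ⊗ₜ (Coalgebra.comul (R := k) c')))))

set_option synthInstance.maxHeartbeats 1000000
set_option maxHeartbeats 1000000

namespace HopfCointegralAux

open Coalgebra HopfAlgebra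

section Conv

variable {A : Type*} [Semiring A] [Algebra k A]

/-- Convolution product on `C →ₗ[k] A`. -/
def conv (f g : C →ₗ[k] A) : C →ₗ[k] A :=
  mul' k A ∘ₗ TensorProduct.map f g ∘ₗ Coalgebra.comul

/-- Convolution unit. -/
def cunit : C →ₗ[k] A := Algebra.linearMap k A ∘ₗ Coalgebra.counit

lemma conv_repr (f g : C →ₗ[k] A) (c : C) {ι : Type*} (r : Repr k c ι) :
    conv f g c = ∑ i ∈ r.index, f (r.left i) * g (r.right i) := by
  simp only [conv, comp_apply, ← r.eq, map_sum, map_tmul, mul'_apply]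

lemma conv_apply' (f g : C →ₗ[k] A) (c : C) :
    conv f g c = ∑ i ∈ (Repr.arbitrary k c).index,
      f ((Repr.arbitrary k c).left i) * g ((Repr.arbitrary k c).right i) :=
  conv_repr f g c _

lemma cunit_apply (c : C) : (cunit : C →ₗ[k] A) c = algebraMap k A (counit c) := rfl

lemma lid_sum (c : C) {ι : Type*} (r : Repr k c ι) :
    ∑ i ∈ r.index, counit (R := k) (r.left i) • r.right i = c := by
  have h := congrArg (TensorProduct.lid k C) (sum_counit_tmul_eq r)
  rw [map_sum] at h
  simp only [lid_tmul, one_smul] at h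
  exact h

lemma rid_sum (c : C) {ι : Type*} (r : Repr k c ι) :
    ∑ i ∈ r.index, counit (R := k) (r.right i) • r.left i = c := by
  have h := congrArg (TensorProduct.rid k C) (sum_tmul_counit_eq r)
  rw [map_sum] at h
  simp only [rid_tmul, one_smul] at h
  exact h

lemma cunit_conv (f : C →ₗ[k] A) : conv cunit f = f := by
  apply LinearMap.ext; intro c
  rw [conv_repr _ _ c (Repr.arbitrary k c)]
  set r := Repr.arbitrary k c
  calc ∑ i ∈ r.index, cunit (r.left i) * f (r.right i)
      = ∑ i ∈ r.index, f (counit (R := k) (r.left i) • r.right i) := by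
        simp only [cunit_apply, map_smul]
        simp only [Algebra.smul_def]
    _ = f c := by rw [← map_sum, lid_sum c r]

lemma conv_cunit (f : C →ₗ[k] A) : conv f cunit = f := by
  apply LinearMap.ext; intro c
  rw [conv_repr _ _ c (Repr.arbitrary k c)]
  set r := Repr.arbitrary k c
  calc ∑ i ∈ r.index, f (r.left i) * cunit (r.right i)
      = ∑ i ∈ r.index, f (counit (R := k) (r.right i) • r.left i) := by
        simp only [cunit_apply, map_smul]
        simp only [Algebra.smul_def]
        simp only [← Algebra.commutes]
    _ = f c := by rw [← map_sum, rid_sum c r]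

lemma conv_assoc (f g h : C →ₗ[k] A) : conv (conv f g) h = conv f (conv g h) := by
  apply LinearMap.ext; intro c
  set r := Repr.arbitrary k c with hrdef
  have key := Coalgebra.sum_map_tmul_tmul_eq (R := k) f g h c (repr := r)
      (a₁ := fun i => Repr.arbitrary k (r.left i))
      (a₂ := fun i => Repr.arbitrary k (r.right i))
  have key2 := congrArg (mul' k A ∘ₗ lTensor A (mul' k A)) key
  rw [conv_repr _ _ c r, conv_repr _ _ c r]
  simp_rw [conv_apply']
  simp_rw [Finset.sum_mul, Finset.mul_sum]
  simpa [map_sum, mul'_apply, lTensor_tmul, mul_assoc] using key2.symm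

end Conv

/-- `G₀ = (S ⊗ S) ∘ τ`. -/
def G0 : C ⊗[k] C →ₗ[k] C ⊗[k] C :=
  TensorProduct.map (antipode (R := k)) (antipode (R := k)) ∘ₗ
    (TensorProduct.comm k C C).toLinearMap

/-- The candidate for `comul ∘ antipode`. -/
def Gm : C →ₗ[k] C ⊗[k] C := G0 ∘ₗ Coalgebra.comul

lemma conv_FD :
    conv (Coalgebra.comul ∘ₗ antipode (R := k) (A := C)) Coalgebra.comul = cunit := by
  apply LinearMap.ext; intro c
  rw [conv_repr _ _ c (Repr.arbitrary k c)]
  set r := Repr.arbitrary k c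
  calc ∑ i ∈ r.index,
        (Coalgebra.comul ∘ₗ antipode (R := k)) (r.left i) * Coalgebra.comul (r.right i)
      = ∑ i ∈ r.index,
          (Coalgebra.comul (R := k) (antipode (R := k) (r.left i) * r.right i)) := by
        simp [Bialgebra.comul_mul]
    _ = Coalgebra.comul (R := k)
          (∑ i ∈ r.index, antipode (R := k) (r.left i) * r.right i) := by
        rw [map_sum]
    _ = cunit c := by rw [sum_antipode_mul_eq_algebraMap_counit r]; simp [cunit, Bialgebra.comul_algebraMap]

lemma inner_step (x z : C) :
    ∑ j ∈ (Repr.arbitrary k x).index,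
      (Coalgebra.comul (R := k) ((Repr.arbitrary k x).left j)) *
        (antipode (R := k) z ⊗ₜ[k] antipode (R := k) ((Repr.arbitrary k x).right j)) =
      (x * antipode (R := k) z) ⊗ₜ[k] (1 : C) := by
  set a := Repr.arbitrary k x with ha
  set d := fun j => Repr.arbitrary k (a.right j) with hd
  set φ : C →ₗ[k] C ⊗[k] C := (TensorProduct.mk k C C (antipode (R := k) z)) ∘ₗ antipode (R := k)
    with hφ
  set Φ : (C ⊗[k] C) ⊗[k] C →ₗ[k] C ⊗[k] C := mul' k (C ⊗[k] C) ∘ₗ lTensor (C ⊗[k] C) φ with hΦ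
  have h1 : ∀ (t : C ⊗[k] C) (y : C),
      Φ (t ⊗ₜ y) = t * ((antipode (R := k) z) ⊗ₜ (antipode (R := k) y)) := by
    intro t y; simp [hΦ, hφ, mul'_apply]
  have h2 : lTensor C (Coalgebra.comul (R := k)) (Coalgebra.comul x)
      = ∑ j ∈ a.index, ∑ m ∈ (d j).index,
          a.left j ⊗ₜ[k] ((d j).left m ⊗ₜ[k] (d j).right m) := by
    rw [← a.eq, map_sum]
    refine Finset.sum_congr rfl fun j _ => ?_
    rw [lTensor_tmul, ← (d j).eq, tmul_sum]
  have h3 : ∑ j ∈ a.index, (Coalgebra.comul (R := k) (a.left j)) ⊗ₜ[k] a.right j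
      = rTensor C (Coalgebra.comul (R := k)) (Coalgebra.comul x) := by
    rw [← a.eq, map_sum]
    simp only [rTensor_tmul]
  calc ∑ j ∈ a.index,
        (Coalgebra.comul (R := k) (a.left j)) *
          (antipode (R := k) z ⊗ₜ[k] antipode (R := k) (a.right j))
      = ∑ j ∈ a.index, Φ ((Coalgebra.comul (R := k) (a.left j)) ⊗ₜ a.right j) :=
        Finset.sum_congr rfl fun j _ => (h1 _ _).symm
    _ = Φ (∑ j ∈ a.index, (Coalgebra.comul (R := k) (a.left j)) ⊗ₜ a.right j) :=
        (map_sum Φ _ _).symm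
    _ = Φ ((TensorProduct.assoc k C C C).symm
          (lTensor C (Coalgebra.comul (R := k)) (Coalgebra.comul x))) := by
        rw [h3, coassoc_symm_apply]
    _ = ∑ j ∈ a.index, ∑ m ∈ (d j).index,
          Φ ((a.left j ⊗ₜ[k] (d j).left m) ⊗ₜ[k] (d j).right m) := by
        rw [h2, map_sum, map_sum]
        refine Finset.sum_congr rfl fun j _ => ?_
        rw [map_sum, map_sum]
        refine Finset.sum_congr rfl fun m _ => ?_
        rw [assoc_symm_tmul]
    _ = ∑ j ∈ a.index, ∑ m ∈ (d j).index,
          (a.left j * antipode (R := k) z) ⊗ₜ[k]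
            ((d j).left m * antipode (R := k) ((d j).right m)) := by
        refine Finset.sum_congr rfl fun j _ => Finset.sum_congr rfl fun m _ => ?_
        rw [h1, Algebra.TensorProduct.tmul_mul_tmul]
    _ = ∑ j ∈ a.index,
          (counit (R := k) (a.right j)) •
            ((a.left j * antipode (R := k) z) ⊗ₜ[k] (1 : C)) := by
        refine Finset.sum_congr rfl fun j _ => ?_
        rw [← tmul_sum, sum_mul_antipode_eq_smul (d j), tmul_smul]
    _ = ((∑ j ∈ a.index, counit (R := k) (a.right j) • a.left j)
          * antipode (R := k) z) ⊗ₜ[k] (1 : C) := by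
        rw [Finset.sum_mul]
        rw [sum_tmul]
        refine Finset.sum_congr rfl fun j _ => ?_
        rw [smul_mul_assoc, smul_tmul']
    _ = (x * antipode (R := k) z) ⊗ₜ[k] (1 : C) := by rw [rid_sum x a]

lemma conv_DG : conv (Coalgebra.comul : C →ₗ[k] C ⊗[k] C) Gm = cunit := by
  apply LinearMap.ext; intro c
  rw [conv_repr _ _ c (Repr.arbitrary k c)]
  set r := Repr.arbitrary k c with hr
  set a := fun i => Repr.arbitrary k (r.left i) with hadef
  set Ψ : C ⊗[k] (C ⊗[k] C) →ₗ[k] C ⊗[k] C :=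
    mul' k (C ⊗[k] C) ∘ₗ TensorProduct.map Coalgebra.comul G0 with hΨ
  have h1 : ∀ (y : C) (t : C ⊗[k] C),
      Ψ (y ⊗ₜ t) = Coalgebra.comul (R := k) y * G0 t := by
    intro y t; simp [hΨ, mul'_apply]
  have hL : ∑ i ∈ r.index, r.left i ⊗ₜ[k] Coalgebra.comul (R := k) (r.right i)
      = lTensor C (Coalgebra.comul (R := k)) (Coalgebra.comul c) := by
    rw [← r.eq, map_sum]; simp only [lTensor_tmul]
  have hR : rTensor C (Coalgebra.comul (R := k)) (Coalgebra.comul c)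
      = ∑ i ∈ r.index, ∑ j ∈ (a i).index,
          ((a i).left j ⊗ₜ[k] (a i).right j) ⊗ₜ[k] r.right i := by
    rw [← r.eq, map_sum]
    refine Finset.sum_congr rfl fun i _ => ?_
    rw [rTensor_tmul, ← (a i).eq, sum_tmul]
  calc ∑ i ∈ r.index, Coalgebra.comul (R := k) (r.left i) * Gm (r.right i)
      = ∑ i ∈ r.index, Ψ (r.left i ⊗ₜ Coalgebra.comul (R := k) (r.right i)) := by
        refine Finset.sum_congr rfl fun i _ => ?_
        rw [h1]; rfl
    _ = Ψ (lTensor C (Coalgebra.comul (R := k)) (Coalgebra.comul c)) := by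
        rw [← hL, map_sum]
    _ = Ψ ((TensorProduct.assoc k C C C)
          (rTensor C (Coalgebra.comul (R := k)) (Coalgebra.comul c))) := by
        rw [coassoc_apply]
    _ = ∑ i ∈ r.index, ∑ j ∈ (a i).index,
          Ψ ((a i).left j ⊗ₜ[k] ((a i).right j ⊗ₜ[k] r.right i)) := by
        rw [hR, map_sum, map_sum]
        refine Finset.sum_congr rfl fun i _ => ?_
        rw [map_sum, map_sum]
        refine Finset.sum_congr rfl fun j _ => ?_
        rw [assoc_tmul]
    _ = ∑ i ∈ r.index, ∑ j ∈ (a i).index,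
          Coalgebra.comul (R := k) ((a i).left j) *
            (antipode (R := k) (r.right i) ⊗ₜ[k] antipode (R := k) ((a i).right j)) := by
        refine Finset.sum_congr rfl fun i _ => Finset.sum_congr rfl fun j _ => ?_
        rw [h1]
        simp [G0]
    _ = ∑ i ∈ r.index, (r.left i * antipode (R := k) (r.right i)) ⊗ₜ[k] (1 : C) :=
        Finset.sum_congr rfl fun i _ => inner_step (r.left i) (r.right i)
    _ = (∑ i ∈ r.index, r.left i * antipode (R := k) (r.right i)) ⊗ₜ[k] (1 : C) := by
        rw [sum_tmul]
    _ = cunit c := by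
        rw [sum_mul_antipode_eq_algebraMap_counit r]
        rw [cunit_apply, Algebra.TensorProduct.algebraMap_apply]

lemma antipode_comul_map :
    (Coalgebra.comul ∘ₗ antipode (R := k) (A := C) : C →ₗ[k] C ⊗[k] C) = Gm := by
  calc (Coalgebra.comul ∘ₗ antipode (R := k) (A := C) : C →ₗ[k] C ⊗[k] C)
      = conv (Coalgebra.comul ∘ₗ antipode (R := k) (A := C)) cunit := (conv_cunit _).symm
    _ = conv (Coalgebra.comul ∘ₗ antipode (R := k) (A := C))
          (conv Coalgebra.comul Gm) := by rw [conv_DG]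
    _ = conv (conv (Coalgebra.comul ∘ₗ antipode (R := k) (A := C)) Coalgebra.comul) Gm :=
        (conv_assoc _ _ _).symm
    _ = conv cunit Gm := by rw [conv_FD]
    _ = Gm := cunit_conv _

/-- The antipode is anticomultiplicative, element version. -/
lemma antipode_comul_elem (y : C) :
    Coalgebra.comul (R := k) (antipode (R := k) y) =
      ∑ m ∈ (Repr.arbitrary k y).index,
        antipode (R := k) ((Repr.arbitrary k y).right m) ⊗ₜ[k]
          antipode (R := k) ((Repr.arbitrary k y).left m) := by
  have h := LinearMap.congr_fun (antipode_comul_map (k := k) (C := C)) y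
  rw [comp_apply] at h
  rw [h]
  show G0 (Coalgebra.comul (R := k) y) = _
  rw [← (Repr.arbitrary k y).eq, map_sum]
  refine Finset.sum_congr rfl fun m _ => ?_
  simp [G0]

end HopfCointegralAux

open HopfCointegralAux Coalgebra HopfAlgebra in
/-- A normalised left integral `λ` on a Hopf algebra `C` (i.e. `c₍₁₎λ(c₍₂₎) = λ(c)·1`
and `λ(1) = 1`) yields the cointegral `δ(c ⊗ c') = λ(c·S(c'))`; in particular `C` is
coseparable. -/
theorem integral_gives_cointegral
    (lam : C →ₗ[k] k)
    (hlam : ∀ c : C,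
      (TensorProduct.rid k C) (lTensor C lam (Coalgebra.comul (R := k) c)) =
        lam c • (1 : C))
    (hone : lam 1 = 1) :
    IsCointegral
      (lam ∘ₗ mul' k C ∘ₗ lTensor C (HopfAlgebra.antipode (R := k))) ∧
    ∃ δ : C ⊗[k] C →ₗ[k] k, IsCointegral δ := by
  set δ : C ⊗[k] C →ₗ[k] k := lam ∘ₗ mul' k C ∘ₗ lTensor C (HopfAlgebra.antipode (R := k))
    with hδdef
  have hδ : ∀ u v : C, δ (u ⊗ₜ v) = lam (u * antipode (R := k) v) := by
    intro u v; simp [hδdef, mul'_apply]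
  have part1 : ∀ c : C, δ (Coalgebra.comul (R := k) c) = Coalgebra.counit (R := k) c := by
    intro c
    rw [hδdef]
    simp only [comp_apply, mul_antipode_lTensor_comul_apply]
    rw [Algebra.algebraMap_eq_smul_one, map_smul, hone, smul_eq_mul, mul_one]
  have part2 : ∀ c c' : C,
      (TensorProduct.rid k C) (lTensor C δ ((TensorProduct.assoc k C C C)
        ((Coalgebra.comul (R := k) c) ⊗ₜ c'))) =
      (TensorProduct.lid k C) (rTensor C δ ((TensorProduct.assoc k C C C).symm
        (c ⊗ₜ (Coalgebra.comul (R := k) c')))) := by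
    intro c c'
    set r := Repr.arbitrary k c with hrdef
    set r' := Repr.arbitrary k c' with hr'def
    set g := fun j => Repr.arbitrary k (r'.left j) with hgdef
    set h := fun j => Repr.arbitrary k (r'.right j) with hhdef
    have hLHS : (TensorProduct.rid k C) (lTensor C δ ((TensorProduct.assoc k C C C)
        ((Coalgebra.comul (R := k) c) ⊗ₜ c'))) =
        ∑ i ∈ r.index, lam (r.right i * antipode (R := k) c') • r.left i := by
      rw [← r.eq, sum_tmul, map_sum, map_sum, map_sum]
      refine Finset.sum_congr rfl fun i _ => ?_
      rw [assoc_tmul, lTensor_tmul, hδ, rid_tmul]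
    have hRHS : (TensorProduct.lid k C) (rTensor C δ ((TensorProduct.assoc k C C C).symm
        (c ⊗ₜ (Coalgebra.comul (R := k) c')))) =
        ∑ j ∈ r'.index, lam (c * antipode (R := k) (r'.left j)) • r'.right j := by
      rw [← r'.eq, tmul_sum, map_sum, map_sum, map_sum]
      refine Finset.sum_congr rfl fun j _ => ?_
      rw [assoc_symm_tmul, rTensor_tmul, hδ, lid_tmul]
    rw [hLHS, hRHS]
    -- key integral identity applied to `c * S(c'₍₁₎)`
    have hH : ∀ j ∈ r'.index,
        ∑ i ∈ r.index, ∑ m ∈ (g j).index,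
          lam (r.right i * antipode (R := k) ((g j).left m)) •
            (r.left i * antipode (R := k) ((g j).right m)) =
        lam (c * antipode (R := k) (r'.left j)) • (1 : C) := by
      intro j _
      have hcm : Coalgebra.comul (R := k) (c * antipode (R := k) (r'.left j)) =
          ∑ i ∈ r.index, ∑ m ∈ (g j).index,
            (r.left i * antipode (R := k) ((g j).right m)) ⊗ₜ[k]
              (r.right i * antipode (R := k) ((g j).left m)) := by
        rw [Bialgebra.comul_mul, antipode_comul_elem (r'.left j), ← r.eq,
          Finset.sum_mul_sum]
        refine Finset.sum_congr rfl fun i _ => Finset.sum_congr rfl fun m _ => ?_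
        rw [Algebra.TensorProduct.tmul_mul_tmul]
      have hint := hlam (c * antipode (R := k) (r'.left j))
      rw [hcm] at hint
      rw [← hint, map_sum, map_sum]
      refine Finset.sum_congr rfl fun i _ => ?_
      rw [map_sum, map_sum]
      refine Finset.sum_congr rfl fun m _ => ?_
      rw [lTensor_tmul, rid_tmul]
    -- the three-fold coassociativity juggle, via the linear map `T`
    set ψ : C →ₗ[k] C :=
      ∑ i ∈ r.index,
        ((lam ∘ₗ LinearMap.mulLeft k (r.right i) ∘ₗ antipode (R := k)).smulRight (r.left i))
      with hψdef
    set χ : C ⊗[k] C →ₗ[k] C := mul' k C ∘ₗ rTensor C (antipode (R := k)) with hχdef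
    set T : C ⊗[k] (C ⊗[k] C) →ₗ[k] C := mul' k C ∘ₗ TensorProduct.map ψ χ with hTdef
    have hT : ∀ x y z : C, T (x ⊗ₜ (y ⊗ₜ z)) =
        ∑ i ∈ r.index,
          lam (r.right i * antipode (R := k) x) •
            (r.left i * (antipode (R := k) y * z)) := by
      intro x y z
      rw [hTdef]
      simp only [comp_apply, map_tmul, mul'_apply, rTensor_tmul, hψdef, hχdef,
        LinearMap.sum_apply, smulRight_apply, comp_apply, mulLeft_apply,
        Finset.sum_mul, smul_mul_assoc]
    have key := Coalgebra.sum_tmul_tmul_eq (R := k) r' g h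
    have keyT := congrArg T key
    rw [map_sum, map_sum] at keyT
    simp only [map_sum] at keyT
    -- identify the two sides of `keyT`
    have E2 : ∑ j ∈ r'.index, ∑ m ∈ (g j).index,
        T ((g j).left m ⊗ₜ[k] ((g j).right m ⊗ₜ[k] r'.right j)) =
        ∑ j ∈ r'.index, lam (c * antipode (R := k) (r'.left j)) • r'.right j := by
      refine Finset.sum_congr rfl fun j hj => ?_
      calc ∑ m ∈ (g j).index, T ((g j).left m ⊗ₜ[k] ((g j).right m ⊗ₜ[k] r'.right j))
          = ∑ m ∈ (g j).index, ∑ i ∈ r.index,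
              (lam (r.right i * antipode (R := k) ((g j).left m)) •
                (r.left i * antipode (R := k) ((g j).right m))) * r'.right j := by
            refine Finset.sum_congr rfl fun m _ => ?_
            rw [hT]
            refine Finset.sum_congr rfl fun i _ => ?_
            rw [smul_mul_assoc, mul_assoc]
        _ = (∑ i ∈ r.index, ∑ m ∈ (g j).index,
              lam (r.right i * antipode (R := k) ((g j).left m)) •
                (r.left i * antipode (R := k) ((g j).right m))) * r'.right j := by
            rw [Finset.sum_mul, Finset.sum_comm]
            refine Finset.sum_congr rfl fun m _ => ?_
            rw [Finset.sum_mul]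
        _ = lam (c * antipode (R := k) (r'.left j)) • r'.right j := by
            rw [hH j hj, smul_mul_assoc, one_mul]
    have E1 : ∑ j ∈ r'.index, ∑ m ∈ (h j).index,
        T (r'.left j ⊗ₜ[k] ((h j).left m ⊗ₜ[k] (h j).right m)) =
        ∑ i ∈ r.index, lam (r.right i * antipode (R := k) c') • r.left i := by
      have step1 : ∀ j ∈ r'.index,
          ∑ m ∈ (h j).index, T (r'.left j ⊗ₜ[k] ((h j).left m ⊗ₜ[k] (h j).right m)) =
          ∑ i ∈ r.index,
            lam (r.right i * antipode (R := k)
              (counit (R := k) (r'.right j) • r'.left j)) • r.left i := by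
        intro j _
        calc ∑ m ∈ (h j).index, T (r'.left j ⊗ₜ[k] ((h j).left m ⊗ₜ[k] (h j).right m))
            = ∑ m ∈ (h j).index, ∑ i ∈ r.index,
                lam (r.right i * antipode (R := k) (r'.left j)) •
                  (r.left i * (antipode (R := k) ((h j).left m) * (h j).right m)) := by
              refine Finset.sum_congr rfl fun m _ => ?_
              rw [hT]
          _ = ∑ i ∈ r.index,
                lam (r.right i * antipode (R := k) (r'.left j)) •
                  (r.left i * (∑ m ∈ (h j).index,
                    antipode (R := k) ((h j).left m) * (h j).right m)) := by
              rw [Finset.sum_comm]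
              refine Finset.sum_congr rfl fun i _ => ?_
              rw [Finset.mul_sum, Finset.smul_sum]
          _ = ∑ i ∈ r.index,
                lam (r.right i * antipode (R := k)
                  (counit (R := k) (r'.right j) • r'.left j)) • r.left i := by
              refine Finset.sum_congr rfl fun i _ => ?_
              rw [sum_antipode_mul_eq_smul (h j), mul_smul_comm, mul_one, smul_smul,
                map_smul, mul_smul_comm, map_smul, smul_eq_mul, mul_comm]
      calc ∑ j ∈ r'.index, ∑ m ∈ (h j).index,
            T (r'.left j ⊗ₜ[k] ((h j).left m ⊗ₜ[k] (h j).right m))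
          = ∑ j ∈ r'.index, ∑ i ∈ r.index,
              lam (r.right i * antipode (R := k)
                (counit (R := k) (r'.right j) • r'.left j)) • r.left i :=
            Finset.sum_congr rfl step1
        _ = ∑ i ∈ r.index, (∑ j ∈ r'.index,
              lam (r.right i * antipode (R := k)
                (counit (R := k) (r'.right j) • r'.left j))) • r.left i := by
            rw [Finset.sum_comm]
            refine Finset.sum_congr rfl fun i _ => ?_
            rw [Finset.sum_smul]
        _ = ∑ i ∈ r.index, lam (r.right i * antipode (R := k) c') • r.left i := by
            refine Finset.sum_congr rfl fun i _ => ?_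
            congr 1
            have : ∑ j ∈ r'.index,
                lam (r.right i * antipode (R := k)
                  (counit (R := k) (r'.right j) • r'.left j)) =
                (lam ∘ₗ LinearMap.mulLeft k (r.right i) ∘ₗ antipode (R := k))
                  (∑ j ∈ r'.index, counit (R := k) (r'.right j) • r'.left j) := by
              rw [map_sum]
              rfl
            rw [this, rid_sum c' r']
            rfl
    rw [← E1, ← keyT, E2]
  exact ⟨⟨part1, part2⟩, ⟨δ, part1, part2⟩⟩
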